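/- (Policy Regret Decomposition) Let k ≥ 1 and let A be an action set with parameter vectors γ(a) = (γ_0(a),...,γ_k(a)) ∈ ℝ^{k+1}. Let (ξ_t)_{t=1}^T be a sequence of real numbers (the shared noise realizations). Let two reward sequences be generated from the same initial values x*_s = x_s for s ≤ 0 by action sequences (a*_t) and (a_t): x*_t = ⟨γ(a*_t), z*_{t-1}⟩ + ξ_t and x_t = ⟨γ(a_t), z_{t-1}⟩ + ξ_t, where z*_{t-1} = (1, x*_{t-1}, ..., x*_{t-k}) and z_{t-1} = (1, x_{t-1}, ..., x_{t-k}). Then for every t ∈ {1,...,T}, the instantaneous policy regret r_t := x*_t − x_t satisfies r_t = Σ_{i=1}^k γ_i(a*_t) r_{t-i} + ρ_t, where ρ_t := ⟨γ(a*_t) − γ(a_t), z_{t-1}⟩ is the instantaneous external regret and r_s = 0 for s ≤ 0. -/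

import Mathlib

/-!
STATEMENT 5 (Policy Regret Decomposition): two reward sequences generated from the same
initial values and the same noise realizations by the action sequences `astar` and `a`
satisfy, for every `t ∈ {1,…,T}`,
`r_t = ∑_{i=1}^k γ_i(a*_t) r_{t-i} + ρ_t`, where `r_t = x*_t − x_t` and
`ρ_t = ⟨γ(a*_t) − γ(a_t), z_{t-1}⟩`.  (For `s ≤ 0`, `r_s = 0` since the histories agree.)
-/
theorem policy_regret_decomposition
    (n k T : ℕ) (hk : 1 ≤ k)
    (γ : Fin n → ℕ → ℝ)
    (ξ : ℤ → ℝ)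
    (astar a : ℤ → Fin n)
    (xstar x : ℤ → ℝ)
    (hinit : ∀ s : ℤ, s ≤ 0 → xstar s = x s)
    (hxstar : ∀ t : ℤ, 1 ≤ t →
      xstar t = γ (astar t) 0 +
        (∑ i ∈ Finset.Icc 1 k, γ (astar t) i * xstar (t - i)) + ξ t)
    (hx : ∀ t : ℤ, 1 ≤ t →
      x t = γ (a t) 0 + (∑ i ∈ Finset.Icc 1 k, γ (a t) i * x (t - i)) + ξ t) :
    ∀ t : ℤ, 1 ≤ t → t ≤ T →
      xstar t - x t =
        (∑ i ∈ Finset.Icc 1 k, γ (astar t) i * (xstar (t - i) - x (t - i))) +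
        ((γ (astar t) 0 - γ (a t) 0) +
          ∑ i ∈ Finset.Icc 1 k, (γ (astar t) i - γ (a t) i) * x (t - i)) := by
  intro t ht _
  rw [hxstar t ht, hx t ht]
  simp only [mul_sub, sub_mul, Finset.sum_sub_distrib]
  ring
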